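/- In the algebra A, the images of the monomials x^a y^b with 0 ≤ a, b ≤ p − 1 form a k-basis of A; in particular dim_k A = p². (A is the restricted Jordan plane.) -/

import Mathlib

noncomputable section

/-- The free algebra on two generators `x = ι 0`, `y = ι 1`. -/
abbrev JordanFree (k : Type*) [Field k] := FreeAlgebra k (Fin 2)

namespace JordanStmt

variable (k : Type*) [Field k]

def X : JordanFree k := FreeAlgebra.ι k (0 : Fin 2)

def Y : JordanFree k := FreeAlgebra.ι k (1 : Fin 2)

/-- The defining relations of the restricted Jordan plane:
`yx − xy + (1/2)x²`, `x^p` and `y^p` are set to `0`.  Taking `RingQuot` of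
this relation is the quotient by the two-sided ideal generated by these
elements. -/
def rel (p : ℕ) : JordanFree k → JordanFree k → Prop := fun a b =>
  (a = Y k * X k - X k * Y k + (2⁻¹ : k) • (X k) ^ 2 ∨
    a = (X k) ^ p ∨ a = (Y k) ^ p) ∧ b = 0

/-- The restricted Jordan plane. -/
def A (p : ℕ) := RingQuot (rel k p)

instance (p : ℕ) : Ring (A k p) := inferInstanceAs (Ring (RingQuot (rel k p)))

instance (p : ℕ) : Algebra k (A k p) :=
  inferInstanceAs (Algebra k (RingQuot (rel k p)))

def xA (p : ℕ) : A k p := RingQuot.mkAlgHom k (rel k p) (X k)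

def yA (p : ℕ) : A k p := RingQuot.mkAlgHom k (rel k p) (Y k)

end JordanStmt

open JordanStmt


namespace JP
open JordanStmt


variable (k : Type*) [Field k] (p : ℕ)

def B : Module.Basis (Fin p × Fin p) k (Fin p × Fin p → k) := Pi.basisFun k _

def ux (ab : Fin p × Fin p) : Fin p × Fin p → k :=
  if h : (ab.1 : ℕ) + 1 < p then B k p (⟨ab.1 + 1, h⟩, ab.2) else 0

def uy (ab : Fin p × Fin p) : Fin p × Fin p → k :=
  if h : (ab.2 : ℕ) + 1 < p then B k p (ab.1, ⟨ab.2 + 1, h⟩) else 0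

def Xop : Module.End k (Fin p × Fin p → k) := (B k p).constr k (ux k p)
def Mop : Module.End k (Fin p × Fin p → k) := (B k p).constr k (uy k p)
def Dop : Module.End k (Fin p × Fin p → k) :=
  (B k p).constr k (fun ab => (-(2⁻¹ : k) * (ab.1 : ℕ)) • ux k p ab)
def Yop : Module.End k (Fin p × Fin p → k) := Mop k p + Dop k p

lemma Xop_apply (ab : Fin p × Fin p) : Xop k p (B k p ab) = ux k p ab :=
  Module.Basis.constr_basis _ _ _ _

lemma Mop_apply (ab : Fin p × Fin p) : Mop k p (B k p ab) = uy k p ab :=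
  Module.Basis.constr_basis _ _ _ _

lemma Dop_apply (ab : Fin p × Fin p) :
    Dop k p (B k p ab) = (-(2⁻¹ : k) * (ab.1 : ℕ)) • ux k p ab :=
  Module.Basis.constr_basis _ _ _ _

lemma rel1 : Yop k p * Xop k p - Xop k p * Yop k p + (2⁻¹ : k) • (Xop k p) ^ 2 = 0 := by
  apply Module.Basis.ext (B k p)
  rintro ⟨a, b⟩
  simp only [Yop, Module.End.mul_apply, LinearMap.add_apply, LinearMap.sub_apply,
    LinearMap.smul_apply, LinearMap.zero_apply, pow_two]
  by_cases ha1 : (a : ℕ) + 1 < p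
  · by_cases ha2 : (a : ℕ) + 1 + 1 < p <;> by_cases hb : (b : ℕ) + 1 < p <;>
      simp [Xop_apply, Mop_apply, Dop_apply, ux, uy, ha1, ha2, hb] <;>
      push_cast <;> module
  · simp [Xop_apply, Mop_apply, Dop_apply, ux, uy, ha1]
    split_ifs <;> simp [Xop_apply, ux, ha1]

lemma Xop_pow (n : ℕ) (a b : Fin p) :
    (Xop k p ^ n) (B k p (a, b)) =
      if h : (a : ℕ) + n < p then B k p (⟨(a : ℕ) + n, h⟩, b) else 0 := by
  induction n generalizing a with
  | zero => simp
  | succ n ih =>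
    rw [pow_succ, Module.End.mul_apply, Xop_apply]
    simp only [ux]
    by_cases ha1 : (a : ℕ) + 1 < p
    · rw [dif_pos ha1, ih]
      by_cases h2 : (a : ℕ) + 1 + n < p
      · rw [dif_pos h2, dif_pos (by omega : (a:ℕ) + (n+1) < p)]
        congr 1
        ext
        · simp; omega
        · rfl
      · rw [dif_neg h2, dif_neg (by omega : ¬ ((a:ℕ) + (n+1) < p))]
    · rw [dif_neg ha1, map_zero, dif_neg (by omega : ¬ ((a:ℕ) + (n+1) < p))]

lemma Mop_pow (n : ℕ) (a b : Fin p) :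
    (Mop k p ^ n) (B k p (a, b)) =
      if h : (b : ℕ) + n < p then B k p (a, ⟨(b : ℕ) + n, h⟩) else 0 := by
  induction n generalizing b with
  | zero => simp
  | succ n ih =>
    rw [pow_succ, Module.End.mul_apply, Mop_apply]
    simp only [uy]
    by_cases hb1 : (b : ℕ) + 1 < p
    · rw [dif_pos hb1, ih]
      by_cases h2 : (b : ℕ) + 1 + n < p
      · rw [dif_pos h2, dif_pos (by omega : (b:ℕ) + (n+1) < p)]
        congr 1
        ext
        · rfl
        · simp; omega
      · rw [dif_neg h2, dif_neg (by omega : ¬ ((b:ℕ) + (n+1) < p))]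
    · rw [dif_neg hb1, map_zero, dif_neg (by omega : ¬ ((b:ℕ) + (n+1) < p))]

lemma Dop_pow (n : ℕ) (a b : Fin p) :
    ∃ c : k, (Dop k p ^ n) (B k p (a, b)) =
      c • (if h : (a : ℕ) + n < p then B k p (⟨(a : ℕ) + n, h⟩, b) else 0) := by
  induction n generalizing a with
  | zero => exact ⟨1, by simp⟩
  | succ n ih =>
    rw [pow_succ, Module.End.mul_apply, Dop_apply]
    simp only [ux]
    by_cases ha1 : (a : ℕ) + 1 < p
    · rw [dif_pos ha1]
      obtain ⟨c, hc⟩ := ih ⟨(a : ℕ) + 1, ha1⟩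
      refine ⟨(-(2⁻¹ : k) * (a : ℕ)) * c, ?_⟩
      rw [map_smul, hc, smul_smul]
      simp only [Fin.val_mk]
      by_cases h2 : (a : ℕ) + 1 + n < p
      · rw [dif_pos h2, dif_pos (by omega : (a:ℕ) + (n+1) < p)]
        congr 2
        ext
        · simp; omega
        · rfl
      · rw [dif_neg h2, dif_neg (by omega : ¬ ((a:ℕ) + (n+1) < p))]
    · rw [dif_neg ha1, smul_zero, map_zero,
        dif_neg (by omega : ¬ ((a:ℕ) + (n+1) < p))]
      exact ⟨0, by simp⟩

lemma Xop_pow_p : Xop k p ^ p = 0 := by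
  apply Module.Basis.ext (B k p)
  rintro ⟨a, b⟩
  rw [Xop_pow, dif_neg (by omega), LinearMap.zero_apply]

lemma Mop_pow_p : Mop k p ^ p = 0 := by
  apply Module.Basis.ext (B k p)
  rintro ⟨a, b⟩
  rw [Mop_pow, dif_neg (by omega), LinearMap.zero_apply]

lemma Dop_pow_p : Dop k p ^ p = 0 := by
  apply Module.Basis.ext (B k p)
  rintro ⟨a, b⟩
  obtain ⟨c, hc⟩ := Dop_pow k p p a b
  rw [hc, dif_neg (by omega), smul_zero, LinearMap.zero_apply]

lemma commute_MD : Commute (Mop k p) (Dop k p) := by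
  apply Module.Basis.ext (B k p)
  rintro ⟨a, b⟩
  by_cases ha1 : (a : ℕ) + 1 < p <;> by_cases hb : (b : ℕ) + 1 < p <;>
    simp [Module.End.mul_apply, Mop_apply, Dop_apply, ux, uy, ha1, hb, map_smul]

lemma Yop_pow_p (hp : p.Prime) [CharP k p] : Yop k p ^ p = 0 := by
  haveI : Fact p.Prime := ⟨hp⟩
  haveI : NeZero p := ⟨hp.pos.ne'⟩
  haveI : Nontrivial (Fin p × Fin p → k) := inferInstance
  haveI : CharP (Module.End k (Fin p × Fin p → k)) p :=
    charP_of_injective_algebraMap (algebraMap k _).injective p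
  rw [Yop, add_pow_char_of_commute p (commute_MD k p), Mop_pow_p, Dop_pow_p, add_zero]

lemma Yop_pow_e [NeZero p] (n : ℕ) (b : Fin p) :
    (Yop k p ^ n) (B k p (0, b)) =
      if h : (b : ℕ) + n < p then B k p (0, ⟨(b : ℕ) + n, h⟩) else 0 := by
  induction n generalizing b with
  | zero => simp
  | succ n ih =>
    rw [pow_succ, Module.End.mul_apply]
    have : Yop k p (B k p (0, b)) = uy k p (0, b) := by
      rw [Yop, LinearMap.add_apply, Mop_apply, Dop_apply]
      simp
    rw [this]
    simp only [uy]
    by_cases hb1 : (b : ℕ) + 1 < p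
    · rw [dif_pos hb1, ih]
      by_cases h2 : (b : ℕ) + 1 + n < p
      · rw [dif_pos h2, dif_pos (by omega : (b:ℕ) + (n+1) < p)]
        congr 1
        ext
        · rfl
        · simp; omega
      · rw [dif_neg h2, dif_neg (by omega : ¬ ((b:ℕ) + (n+1) < p))]
    · rw [dif_neg hb1, map_zero,
        dif_neg (by omega : ¬ ((b:ℕ) + (n+1) < p))]

lemma monomial_eval [NeZero p] (a b : Fin p) :
    (Xop k p ^ (a : ℕ) * Yop k p ^ (b : ℕ)) (B k p (0, 0)) = B k p (a, b) := by
  rw [Module.End.mul_apply, Yop_pow_e, dif_pos (by simpa using b.isLt)]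
  rw [Xop_pow, dif_pos (by simpa using a.isLt)]
  congr 1
  ext
  · simp
  · simp


def f : JordanFree k →ₐ[k] Module.End k (Fin p × Fin p → k) :=
  FreeAlgebra.lift k ![Xop k p, Yop k p]

lemma f_X : f k p (X k) = Xop k p := by
  simp [f, X, FreeAlgebra.lift_ι_apply]

lemma f_Y : f k p (Y k) = Yop k p := by
  simp [f, Y, FreeAlgebra.lift_ι_apply]

lemma f_rel (hp : p.Prime) [CharP k p] :
    ∀ ⦃a b : JordanFree k⦄, rel k p a b → f k p a = f k p b := by
  rintro a b ⟨(h | h | h), rfl⟩ <;> subst h <;> rw [map_zero]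
  · rw [map_add, map_sub, map_mul, map_mul, map_smul, map_pow, f_X, f_Y, rel1]
  · rw [map_pow, f_X, Xop_pow_p]
  · rw [map_pow, f_Y, Yop_pow_p k p hp]

def phi (hp : p.Prime) [CharP k p] : A k p →ₐ[k] Module.End k (Fin p × Fin p → k) :=
  RingQuot.liftAlgHom k ⟨f k p, f_rel k p hp⟩

lemma phi_x (hp : p.Prime) [CharP k p] : phi k p hp (xA k p) = Xop k p := by
  rw [phi, xA]
  exact (RingQuot.liftAlgHom_mkAlgHom_apply k (f k p) (f_rel k p hp) (X k)).trans (f_X k p)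

lemma phi_y (hp : p.Prime) [CharP k p] : phi k p hp (yA k p) = Yop k p := by
  rw [phi, yA]
  exact (RingQuot.liftAlgHom_mkAlgHom_apply k (f k p) (f_rel k p hp) (Y k)).trans (f_Y k p)

lemma indep (hp : p.Prime) [CharP k p] :
    LinearIndependent k
      (fun ab : Fin p × Fin p => xA k p ^ (ab.1 : ℕ) * yA k p ^ (ab.2 : ℕ)) := by
  haveI : NeZero p := ⟨hp.pos.ne'⟩
  apply LinearIndependent.of_comp
    (LinearMap.applyₗ (B k p (0, 0)) ∘ₗ (phi k p hp).toLinearMap)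
  have : (⇑(LinearMap.applyₗ (B k p (0, 0)) ∘ₗ (phi k p hp).toLinearMap) ∘
      fun ab : Fin p × Fin p => xA k p ^ (ab.1 : ℕ) * yA k p ^ (ab.2 : ℕ)) =
      fun ab : Fin p × Fin p => B k p ab := by
    funext ab
    show phi k p hp (xA k p ^ (ab.1 : ℕ) * yA k p ^ (ab.2 : ℕ)) (B k p (0, 0)) = B k p ab
    rw [map_mul, map_pow, map_pow, phi_x, phi_y, monomial_eval]
  rw [this]
  exact (B k p).linearIndependent

lemma x_pow_p : xA k p ^ p = 0 := by
  have h := RingQuot.mkAlgHom_rel k (s := rel k p) (x := (X k) ^ p) (y := 0)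
    ⟨Or.inr (Or.inl rfl), rfl⟩
  rwa [map_pow, map_zero] at h

lemma y_pow_p : yA k p ^ p = 0 := by
  have h := RingQuot.mkAlgHom_rel k (s := rel k p) (x := (Y k) ^ p) (y := 0)
    ⟨Or.inr (Or.inr rfl), rfl⟩
  rwa [map_pow, map_zero] at h

lemma yx_eq : yA k p * xA k p = xA k p * yA k p - (2⁻¹ : k) • xA k p ^ 2 := by
  have h := RingQuot.mkAlgHom_rel k (s := rel k p)
    (x := Y k * X k - X k * Y k + (2⁻¹ : k) • (X k) ^ 2) (y := 0) ⟨Or.inl rfl, rfl⟩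
  rw [map_add, map_sub, map_mul, map_mul, map_smul, map_pow, map_zero] at h
  rw [sub_add_eq_add_sub, sub_eq_zero] at h
  rw [eq_sub_iff_add_eq]
  exact h

def S : Submodule k (A k p) :=
  Submodule.span k
    (Set.range (fun ab : Fin p × Fin p => xA k p ^ (ab.1 : ℕ) * yA k p ^ (ab.2 : ℕ)))

lemma mono_mem (hp : 0 < p) (a b : ℕ) : xA k p ^ a * yA k p ^ b ∈ S k p := by
  by_cases ha : a < p
  · by_cases hb : b < p
    · exact Submodule.subset_span ⟨(⟨a, ha⟩, ⟨b, hb⟩), rfl⟩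
    · have : yA k p ^ b = 0 := by
        rw [(by omega : b = p + (b - p)), pow_add, y_pow_p, zero_mul]
      rw [this, mul_zero]
      exact zero_mem _
  · have : xA k p ^ a = 0 := by
      rw [(by omega : a = p + (a - p)), pow_add, x_pow_p, zero_mul]
    rw [this, zero_mul]
    exact zero_mem _

def T (n : ℕ) : Submodule k (A k p) :=
  Submodule.span k {z | ∃ i j, j ≤ n ∧ z = xA k p ^ i * yA k p ^ j}

lemma T_mono {m n : ℕ} (h : m ≤ n) : T k p m ≤ T k p n :=
  Submodule.span_mono (fun _ ⟨i, j, hj, hz⟩ => ⟨i, j, hj.trans h, hz⟩)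

lemma T_le_S (hp : 0 < p) (n : ℕ) : T k p n ≤ S k p := by
  rw [T, Submodule.span_le]
  rintro z ⟨i, j, hj, rfl⟩
  exact mono_mem k p hp i j

lemma T_mul_y {n : ℕ} {z : A k p} (hz : z ∈ T k p n) :
    z * yA k p ∈ T k p (n + 1) := by
  induction hz using Submodule.span_induction with
  | mem z hz =>
    obtain ⟨i, j, hj, rfl⟩ := hz
    exact Submodule.subset_span ⟨i, j + 1, by omega, by rw [pow_succ, mul_assoc]⟩
  | zero => rw [zero_mul]; exact zero_mem _
  | add u v _ _ hu hv => rw [add_mul]; exact add_mem hu hv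
  | smul c u _ hu => rw [smul_mul_assoc]; exact Submodule.smul_mem _ _ hu

lemma mul_x_key (n : ℕ) : ∀ a : ℕ, xA k p ^ a * yA k p ^ n * xA k p ∈ T k p n := by
  induction n using Nat.strong_induction_on with
  | _ n IH =>
    match n with
    | 0 =>
      intro a
      refine Submodule.subset_span ⟨a + 1, 0, le_refl _, ?_⟩
      rw [pow_zero, mul_one, mul_one, pow_succ]
    | (m + 1) =>
      intro a
      have hTx : ∀ z ∈ T k p m, z * xA k p ∈ T k p m := by
        intro z hz
        induction hz using Submodule.span_induction with
        | mem z hz =>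
          obtain ⟨i, j, hj, rfl⟩ := hz
          exact T_mono k p hj (IH j (by omega) i)
        | zero => rw [zero_mul]; exact zero_mem _
        | add u v _ _ hu hv => rw [add_mul]; exact add_mem hu hv
        | smul c u _ hu => rw [smul_mul_assoc]; exact Submodule.smul_mem _ _ hu
      have key : xA k p ^ a * yA k p ^ (m + 1) * xA k p =
          (xA k p ^ a * yA k p ^ m * xA k p) * yA k p -
            (2⁻¹ : k) • ((xA k p ^ a * yA k p ^ m * xA k p) * xA k p) := by
        rw [pow_succ, ← mul_assoc, mul_assoc _ (yA k p) (xA k p), yx_eq, mul_sub,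
          mul_smul_comm, pow_two, ← mul_assoc, ← mul_assoc]
      rw [key]
      have h1 : xA k p ^ a * yA k p ^ m * xA k p ∈ T k p m := IH m (by omega) a
      refine sub_mem (T_mul_y k p h1) (Submodule.smul_mem _ _ ?_)
      exact T_mono k p (by omega) (hTx _ h1)

lemma S_mul_x (hp : 0 < p) {z : A k p} (hz : z ∈ S k p) : z * xA k p ∈ S k p := by
  induction hz using Submodule.span_induction with
  | mem z hz =>
    obtain ⟨⟨a, b⟩, rfl⟩ := hz
    exact T_le_S k p hp _ (mul_x_key k p (b : ℕ) (a : ℕ))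
  | zero => rw [zero_mul]; exact zero_mem _
  | add u v _ _ hu hv => rw [add_mul]; exact add_mem hu hv
  | smul c u _ hu => rw [smul_mul_assoc]; exact Submodule.smul_mem _ _ hu

lemma S_mul_y (hp : 0 < p) {z : A k p} (hz : z ∈ S k p) : z * yA k p ∈ S k p := by
  induction hz using Submodule.span_induction with
  | mem z hz =>
    obtain ⟨⟨a, b⟩, rfl⟩ := hz
    rw [mul_assoc, ← pow_succ]
    exact mono_mem k p hp _ _
  | zero => rw [zero_mul]; exact zero_mem _
  | add u v _ _ hu hv => rw [add_mul]; exact add_mem hu hv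
  | smul c u _ hu => rw [smul_mul_assoc]; exact Submodule.smul_mem _ _ hu

lemma S_mul_xpow (hp : 0 < p) {z : A k p} (hz : z ∈ S k p) (n : ℕ) :
    z * xA k p ^ n ∈ S k p := by
  induction n with
  | zero => simpa using hz
  | succ n ih => rw [pow_succ, ← mul_assoc]; exact S_mul_x k p hp ih

lemma S_mul_ypow (hp : 0 < p) {z : A k p} (hz : z ∈ S k p) (n : ℕ) :
    z * yA k p ^ n ∈ S k p := by
  induction n with
  | zero => simpa using hz
  | succ n ih => rw [pow_succ, ← mul_assoc]; exact S_mul_y k p hp ih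

lemma S_mul (hp : 0 < p) {z w : A k p} (hz : z ∈ S k p) (hw : w ∈ S k p) :
    z * w ∈ S k p := by
  induction hw using Submodule.span_induction with
  | mem w hw =>
    obtain ⟨⟨a, b⟩, rfl⟩ := hw
    rw [← mul_assoc]
    exact S_mul_ypow k p hp (S_mul_xpow k p hp hz _) _
  | zero => rw [mul_zero]; exact zero_mem _
  | add u v _ _ hu hv => rw [mul_add]; exact add_mem hu hv
  | smul c u _ hu => rw [mul_smul_comm]; exact Submodule.smul_mem _ _ hu

lemma one_mem_S (hp : 0 < p) : (1 : A k p) ∈ S k p := by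
  simpa using mono_mem k p hp 0 0

lemma S_top (hp : 0 < p) : S k p = ⊤ := by
  rw [eq_top_iff]
  rintro z -
  obtain ⟨w, rfl⟩ := RingQuot.mkAlgHom_surjective k (rel k p) z
  have hw : w ∈ Algebra.adjoin k (Set.range (FreeAlgebra.ι k)) := by
    rw [FreeAlgebra.adjoin_range_ι]; trivial
  induction hw using Algebra.adjoin_induction with
  | mem u hu =>
    obtain ⟨i, rfl⟩ := hu
    fin_cases i
    · exact (by simpa using mono_mem k p hp 1 0 : xA k p ∈ S k p)
    · exact (by simpa using mono_mem k p hp 0 1 : yA k p ∈ S k p)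
  | algebraMap r =>
    rw [AlgHom.commutes, Algebra.algebraMap_eq_smul_one]
    exact Submodule.smul_mem _ _ (one_mem_S k p hp)
  | add u v _ _ hu hv => rw [map_add]; exact add_mem hu hv
  | mul u v _ _ hu hv => rw [map_mul]; exact S_mul k p hp hu hv

end JP

/-- Let `k` be a field of odd prime characteristic `p` and
`A` the restricted Jordan plane over `k`.  The images of the monomials
`x^a y^b`, `0 ≤ a, b ≤ p − 1`, form a `k`-basis of `A`; in particular
`dim_k A = p²`. -/
theorem restricted_jordan_plane_basis
    (k : Type*) [Field k] (p : ℕ) (hp : p.Prime) (hodd : Odd p)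
    [CharP k p] :
    LinearIndependent k
      (fun ab : Fin p × Fin p =>
        xA k p ^ (ab.1 : ℕ) * yA k p ^ (ab.2 : ℕ)) ∧
    Submodule.span k
      (Set.range (fun ab : Fin p × Fin p =>
        xA k p ^ (ab.1 : ℕ) * yA k p ^ (ab.2 : ℕ))) = ⊤ ∧
    Module.finrank k (A k p) = p ^ 2 := by
  refine ⟨JP.indep k p hp, JP.S_top k p hp.pos, ?_⟩
  have b : Module.Basis (Fin p × Fin p) k (A k p) :=
    Module.Basis.mk (JP.indep k p hp) (le_of_eq (JP.S_top k p hp.pos).symm)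
  rw [Module.finrank_eq_card_basis b, Fintype.card_prod, Fintype.card_fin, sq]
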